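/- The arboricity of the complete graph K_k on k vertices equals ⌈k/2⌉. -/

import Mathlib

open SimpleGraph Walk

section Aux
variable {V : Type*} {G : SimpleGraph V}

lemma firstEdge_mem {u v : V} (p : G.Walk u v) (hp : ¬p.Nil) : s(u, p.getVert 1) ∈ p.edges := by
  have h := p.cons_tail_eq hp
  have h2 : s(u, p.getVert 1) ∈ (cons (p.adj_snd hp) p.tail).edges := by
    rw [edges_cons]; exact List.mem_cons_self
  rwa [h] at h2

lemma isAcyclic_of_rank (r : V → ℕ) (h1 : ∀ u v, G.Adj u v → r u ≠ r v)
    (h2 : ∀ v u w, G.Adj v u → G.Adj v w → r u < r v → r w < r v → u = w) : G.IsAcyclic := by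
  intro v0 c0 hc0
  classical
  have hne : c0.support.toFinset.Nonempty := by
    simp [List.toFinset_nonempty_iff]
  obtain ⟨w, hw, hmax⟩ := c0.support.toFinset.exists_max_image r hne
  rw [List.mem_toFinset] at hw
  have hc : (c0.rotate w hw).IsCycle := hc0.rotate hw
  have hsupp : ∀ x ∈ (c0.rotate w hw).support.tail, r x ≤ r w := by
    intro x hx
    have := (support_rotate c0 w hw).mem_iff.mp hx
    exact hmax x (List.mem_toFinset.mpr (List.mem_of_mem_tail this))
  set c := c0.rotate w hw with hcdef
  clear_value c
  cases c with
  | nil => exact hc.ne_nil rfl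
  | cons h q =>
    rename_i x
    have hxw : x ≠ w := by
      intro hxw; subst hxw; exact G.irrefl h
    have hqnil : ¬ q.reverse.Nil := not_nil_of_ne (Ne.symm hxw)
    set y := q.reverse.getVert 1 with hy
    have hadjy : G.Adj w y := q.reverse.adj_snd hqnil
    have hymem : s(w, y) ∈ q.edges := by
      have := firstEdge_mem q.reverse hqnil
      rwa [edges_reverse, List.mem_reverse] at this
    have hxmem : x ∈ (cons h q).support.tail := by simp
    have hymemsup : y ∈ (cons h q).support.tail := by
      have : y ∈ q.reverse.support := by
        rw [mem_support_iff_exists_getVert]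
        exact ⟨1, rfl, by
          have : 0 < q.reverse.length := by
            rw [not_nil_iff_lt_length] at hqnil; exact hqnil
          omega⟩
      rw [support_reverse, List.mem_reverse] at this
      simpa using this
    have hrx : r x < r w := lt_of_le_of_ne (hsupp x hxmem) (fun he => h1 w x h he.symm)
    have hry : r y < r w := lt_of_le_of_ne (hsupp y hymemsup) (fun he => h1 w y hadjy he.symm)
    have hxy : x = y := h2 w x y h hadjy hrx hry
    have hnodup := hc.edges_nodup
    rw [edges_cons, List.nodup_cons] at hnodup
    rw [← hxy] at hymem
    exact hnodup.1 hymem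

lemma forest_edge_bound [Fintype V] [Nonempty V] (hG : G.IsAcyclic) :
    G.edgeSet.ncard ≤ Fintype.card V - 1 := by
  classical
  set root : V → V := fun v => Quot.out (G.connectedComponentMk v) with hrootdef
  have hmkroot : ∀ v, G.connectedComponentMk (root v) = G.connectedComponentMk v := by
    intro v; exact Quot.out_eq _
  have hreach : ∀ v, G.Reachable v (root v) := by
    intro v
    exact ConnectedComponent.exact (hmkroot v).symm
  have hrootadj : ∀ u v, G.Adj u v → root u = root v := by
    intro u v h
    simp only [hrootdef, ConnectedComponent.connectedComponentMk_eq_of_adj h]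
  have hrootidem : ∀ v, root (root v) = root v := by
    intro v; exact congrArg Quot.out (hmkroot v)
  set P : ∀ v : V, G.Path v (root v) := fun v => (hreach v).some.toPath with hP
  have hPnil : ∀ v, v = root v → ((P v : G.Walk v (root v))).Nil := by
    intro v h
    have hq : ((Walk.nil : G.Walk v v).copy rfl h).IsPath := by simp
    have := hG.path_unique (P v) ⟨_, hq⟩
    rw [this]
    simp [nil_iff_length_eq]
  have hdich : ∀ u v, G.Adj u v →
      ((P u : G.Walk u (root u)).getVert 1 = v ∨ (P v : G.Walk v (root v)).getVert 1 = u) := by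
    intro u v h
    by_cases hv : v ∈ (P u : G.Walk u (root u)).support
    · left
      have htake : ((P u : G.Walk u (root u)).takeUntil v hv) = Walk.cons h Walk.nil := by
        have h1 : ((P u : G.Walk u (root u)).takeUntil v hv).IsPath :=
          (P u).2.takeUntil hv
        have h2 : (Walk.cons h (Walk.nil : G.Walk v v)).IsPath := by
          simp [h.ne]
        exact congrArg Subtype.val (hG.path_unique ⟨_, h1⟩ ⟨_, h2⟩)
      have hspec := (P u : G.Walk u (root u)).take_spec hv
      have := getVert_append ((P u : G.Walk u (root u)).takeUntil v hv)
        ((P u : G.Walk u (root u)).dropUntil v hv) 1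
      rw [hspec] at this
      rw [this, htake]
      simp
    · right
      have hq : (Walk.cons h.symm (P u : G.Walk u (root u))).IsPath := by
        rw [cons_isPath_iff]
        exact ⟨(P u).2, hv⟩
      have hru : root u = root v := hrootadj u v h
      have hq' : ((Walk.cons h.symm (P u : G.Walk u (root u))).copy rfl hru).IsPath := by
        simpa using hq
      have := hG.path_unique (P v) ⟨_, hq'⟩
      rw [this]
      simp [getVert_copy, getVert_cons_succ]
  set S : Set V := {v | v ≠ root v} with hS
  set ψ : V → Sym2 V := fun v => s(v, (P v : G.Walk v (root v)).getVert 1) with hψ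
  have hsub : G.edgeSet ⊆ ψ '' S := by
    rintro e he
    induction e with
    | h u v =>
      rw [SimpleGraph.mem_edgeSet] at he
      have hcover : ∀ a b : V, G.Adj a b → (P a : G.Walk a (root a)).getVert 1 = b →
          s(a, b) ∈ ψ '' S := by
        intro a b hab hfirst
        have ha : a ≠ root a := by
          intro hroot
          have := hPnil a hroot
          rw [nil_iff_length_eq] at this
          have := (P a : G.Walk a (root a)).getVert_of_length_le
            (by omega : (P a : G.Walk a (root a)).length ≤ 1)
          rw [hfirst] at this
          exact hab.ne (this.trans hroot.symm).symm
        exact ⟨a, ha, by rw [hψ]; simp [hfirst]⟩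
      rcases hdich u v he with h1 | h1
      · exact hcover u v he h1
      · have := hcover v u he.symm h1
        rwa [Sym2.eq_swap] at this
  calc G.edgeSet.ncard ≤ (ψ '' S).ncard := Set.ncard_le_ncard hsub (Set.toFinite _)
    _ ≤ S.ncard := Set.ncard_image_le (Set.toFinite _)
    _ ≤ Fintype.card V - 1 := by
        have hr0 : root (Classical.arbitrary V) ∉ S := by
          simp [hS, hrootidem]
        have hsub2 : S ⊆ Set.univ \ {root (Classical.arbitrary V)} := by
          intro x hx
          simp only [Set.mem_diff, Set.mem_univ, true_and, Set.mem_singleton_iff]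
          rintro rfl
          exact hr0 hx
        calc S.ncard ≤ (Set.univ \ {root (Classical.arbitrary V)}).ncard :=
              Set.ncard_le_ncard hsub2 (Set.toFinite _)
          _ = Fintype.card V - 1 := by
              rw [Set.ncard_diff (Set.subset_univ _), Set.ncard_univ, Set.ncard_singleton,
                Nat.card_eq_fintype_card]

end Aux

noncomputable def arboricity {V : Type*} (G : SimpleGraph V) : ℕ :=
  sInf {n | ∃ f : Fin n → SimpleGraph V,
    (∀ i, (f i).IsAcyclic) ∧ (∀ i, f i ≤ G) ∧
    ∀ e ∈ G.edgeSet, ∃ i, e ∈ (f i).edgeSet}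

/-- index of the forest covering edge `{a, b}` -/
def idxN (a b : ℕ) : ℕ := if a % 2 = b % 2 then min a b / 2 else max a b / 2

/-- the `i`-th forest -/
def FF (k i : ℕ) : SimpleGraph (Fin k) where
  Adj u v := u ≠ v ∧ idxN u.val v.val = i
  symm := by
    constructor; rintro u v ⟨h1, h2⟩
    refine ⟨h1.symm, ?_⟩
    unfold idxN at h2 ⊢
    split_ifs at h2 ⊢ <;> omega
  loopless := by constructor; rintro u ⟨h1, _⟩; exact h1 rfl

lemma FF_isAcyclic (k i : ℕ) : (FF k i).IsAcyclic := by
  apply isAcyclic_of_rank (fun v => if v.val = 2*i then 0 else if v.val = 2*i+1 then 1 else 2)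
  · rintro u v ⟨hne, hidx⟩
    have hne' : u.val ≠ v.val := fun h => hne (Fin.ext h)
    unfold idxN at hidx
    split_ifs at hidx ⊢ <;> omega
  · rintro v u w ⟨hvu, hidxu⟩ ⟨hvw, hidxw⟩ hlt1 hlt2
    have h1 : v.val ≠ u.val := fun h => hvu (Fin.ext h)
    have h2 : v.val ≠ w.val := fun h => hvw (Fin.ext h)
    apply Fin.ext
    unfold idxN at hidxu hidxw
    split_ifs at hidxu hidxw hlt1 hlt2 <;> omega

theorem arboricity_completeGraph' (k : ℕ) (hk : 2 ≤ k) :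
    arboricity (⊤ : SimpleGraph (Fin k)) = (k+1)/2 := by
  classical
  set m := (k+1)/2 with hm
  apply le_antisymm
  · -- upper bound: membership
    apply Nat.sInf_le
    refine ⟨fun i => FF k i.val, fun i => FF_isAcyclic k i.val, fun i => le_top, ?_⟩
    rintro e he
    induction e with
    | h u v =>
      rw [SimpleGraph.mem_edgeSet, top_adj] at he
      have hne' : u.val ≠ v.val := fun h => he (Fin.ext h)
      have hu := u.isLt
      have hv := v.isLt
      have hbound : idxN u.val v.val < m := by
        unfold idxN; split_ifs <;> omega
      exact ⟨⟨idxN u.val v.val, hbound⟩, by rw [SimpleGraph.mem_edgeSet]; exact ⟨he, rfl⟩⟩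
  · -- lower bound
    apply le_csInf
    · refine ⟨m, fun i => FF k i.val, fun i => FF_isAcyclic k i.val, fun i => le_top, ?_⟩
      rintro e he
      induction e with
      | h u v =>
        rw [SimpleGraph.mem_edgeSet, top_adj] at he
        have hne' : u.val ≠ v.val := fun h => he (Fin.ext h)
        have hu := u.isLt
        have hv := v.isLt
        have hbound : idxN u.val v.val < m := by
          unfold idxN; split_ifs <;> omega
        exact ⟨⟨idxN u.val v.val, hbound⟩, by rw [SimpleGraph.mem_edgeSet]; exact ⟨he, rfl⟩⟩
    · rintro n ⟨f, hac, hle, hcov⟩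
      have hnonempty : Nonempty (Fin k) := ⟨⟨0, by omega⟩⟩
      have hsub : (⊤ : SimpleGraph (Fin k)).edgeFinset ⊆
          Finset.univ.biUnion (fun i : Fin n => (f i).edgeFinset) := by
        intro e he
        rw [mem_edgeFinset] at he
        obtain ⟨i, hi⟩ := hcov e he
        exact Finset.mem_biUnion.mpr ⟨i, Finset.mem_univ i, mem_edgeFinset.mpr hi⟩
      have hcard1 : (⊤ : SimpleGraph (Fin k)).edgeFinset.card = k.choose 2 := by
        rw [card_edgeFinset_top_eq_card_choose_two, Fintype.card_fin]
      have hcard2 : ∀ i : Fin n, (f i).edgeFinset.card ≤ k - 1 := by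
        intro i
        have h1 : (f i).edgeSet.ncard ≤ Fintype.card (Fin k) - 1 := forest_edge_bound (hac i)
        rw [Fintype.card_fin] at h1
        rwa [Set.ncard_eq_toFinset_card' ((f i).edgeSet)] at h1
      have hchain : k.choose 2 ≤ n * (k - 1) := by
        calc k.choose 2 = (⊤ : SimpleGraph (Fin k)).edgeFinset.card := hcard1.symm
          _ ≤ (Finset.univ.biUnion (fun i : Fin n => (f i).edgeFinset)).card :=
              Finset.card_le_card hsub
          _ ≤ ∑ i : Fin n, (f i).edgeFinset.card := Finset.card_biUnion_le
          _ ≤ ∑ _i : Fin n, (k - 1) := Finset.sum_le_sum (fun i _ => hcard2 i)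
          _ = n * (k - 1) := by simp [Finset.sum_const, Finset.card_univ, mul_comm]
      rw [Nat.choose_two_right] at hchain
      have hdvd : 2 ∣ k * (k - 1) := by
        rcases Nat.even_or_odd k with he | ho
        · exact Dvd.dvd.mul_right he.two_dvd _
        · refine Dvd.dvd.mul_left ?_ _
          obtain ⟨t, ht⟩ := ho
          omega
      obtain ⟨t, ht⟩ := hdvd
      have hchain' : t ≤ n * (k - 1) := by
        rw [ht, Nat.mul_div_cancel_left t (by norm_num : 0 < 2)] at hchain
        exact hchain
      have h3 : k * (k - 1) ≤ 2 * n * (k - 1) := by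
        rw [ht, mul_assoc]
        exact Nat.mul_le_mul_left 2 hchain'
      have h4 : k ≤ 2 * n := Nat.le_of_mul_le_mul_right h3 (by omega)
      omega

/-- The arboricity of the complete graph on `k ≥ 2` vertices is `⌈k/2⌉`. -/
theorem arboricity_completeGraph (k : ℕ) (hk : 2 ≤ k) :
    arboricity (⊤ : SimpleGraph (Fin k)) = ⌈(k : ℚ) / 2⌉ := by
  rw [arboricity_completeGraph' k hk]
  rw [eq_comm, Int.ceil_eq_iff]
  have h1 : 2 * ((k+1)/2) ≤ k + 1 := by omega
  have h2 : k ≤ 2 * ((k+1)/2) := by omega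
  constructor
  · push_cast
    qify at h1
    linarith
  · push_cast
    qify at h2
    linarith
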